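/- Backward direction of the 3SAT reduction: if the constructed DAG alignment instance admits a valid alignment M with weight w(M) ≥ 3m, then the 3SAT instance φ is satisfiable. -/

import Mathlib

/-- Vertices of the graph `G1` built from a 3SAT instance with `m` clauses: one vertex
`(x_j^p, i)` for each occurrence of a literal in a clause, i.e. one vertex per
(clause index, position) pair — so `|V1| = 3m`. -/
abbrev V1SAT (m : ℕ) := Fin m × Fin 3

/-- A 3SAT instance with `n` variables and `m` clauses is given by
`C : Fin m → Fin 3 → Fin n × Bool`, where `C i p` is the literal at position `p` of
clause `c_i`; the literal `(j, false)` is `x_j^0 (= x_j)` and `(j, true)` is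
`x_j^1 (= ¬ x_j)`.  Edges of `G1` : a directed edge from each occurrence `(x_j^0, i)` to
each occurrence `(x_j^1, t)`, for all clause indices `i, t`. -/
def E1SAT {n m : ℕ} (C : Fin m → Fin 3 → Fin n × Bool) (u w : V1SAT m) : Prop :=
  (C u.1 u.2).1 = (C w.1 w.2).1 ∧ (C u.1 u.2).2 = false ∧ (C w.1 w.2).2 = true

/-- Vertices of the graph `G2`: the vertices `(y_j, i)` and `(z_j, i)` for `j ≤ n`,
`i ≤ m` — encoded as `Sum.inl ((j, b), i)` with `b = false` for `y_j` and `b = true` for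
`z_j` — together with the vertices `(c_i, 1)` and `(c_i, 2)`, encoded `Sum.inr (i, s)`. -/
abbrev V2SAT (n m : ℕ) := ((Fin n × Bool) × Fin m) ⊕ (Fin m × Fin 2)

/-- Edges of `G2`: `((z_j, i), (y_j, t))`, `((y_j, t), (c_i, 1))` and
`((y_j, t), (c_i, 2))` for all `j ≤ n` and `i, t ≤ m`. -/
def E2SAT {n m : ℕ} (a b : V2SAT n m) : Prop :=
  (∃ j i t, a = Sum.inl ((j, true), i) ∧ b = Sum.inl ((j, false), t)) ∨
  (∃ j t i s, a = Sum.inl ((j, false), t) ∧ b = Sum.inr (i, s))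

/-- An edge conflict for the candidate edge `e = (a, b, w_e)` with another candidate edge
`d = (f, g, w_d)`, `d ≠ e`: (1) `a ∈ anc(f)` and `b ∉ anc(g)`, or (2) `a ∈ desc(f)` and
`b ∉ desc(g)`, or (3) `a = f`, or (4) `b = g`. -/
def Conf {V1 V2 : Type*} (E1 : V1 → V1 → Prop) (E2 : V2 → V2 → Prop)
    (e d : V1 × V2 × ℝ) : Prop :=
  d ≠ e ∧
    ((Relation.TransGen E1 e.1 d.1 ∧ ¬ Relation.TransGen E2 e.2.1 d.2.1) ∨
     (Relation.TransGen E1 d.1 e.1 ∧ ¬ Relation.TransGen E2 d.2.1 e.2.1) ∨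
     e.1 = d.1 ∨ e.2.1 = d.2.1)

/-- A valid alignment is a set `M ⊆ β` such that each vertex of `V1` and of `V2` appears
in at most one edge of `M`, and for every `e ∈ M`, `conf(e) ∩ M = ∅`. -/
def ValidAlignment {V1 V2 : Type*} (E1 : V1 → V1 → Prop) (E2 : V2 → V2 → Prop)
    (β M : Finset (V1 × V2 × ℝ)) : Prop :=
  M ⊆ β ∧
  (∀ e ∈ M, ∀ d ∈ M, e ≠ d → e.1 ≠ d.1 ∧ e.2.1 ≠ d.2.1) ∧
  (∀ e ∈ M, ∀ d ∈ M, ¬ Conf E1 E2 e d)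

open scoped Classical in
/-- The candidate edge set `β` of the reduction, all edges of weight `1`: each literal
occurrence `(x_j^p, i)` is matchable to its corresponding vertex of `G2` (to `(y_j, i)`
if `p = 0`, to `(z_j, i)` if `p = 1`, i.e. to `Sum.inl (C i pos, i)`), and to the
vertices `(c_i, 1)` and `(c_i, 2)`. -/
noncomputable def betaSAT (n m : ℕ) (C : Fin m → Fin 3 → Fin n × Bool) :
    Finset (V1SAT m × V2SAT n m × ℝ) :=
  (Finset.univ.image fun v : V1SAT m => (v, Sum.inl (C v.1 v.2, v.1), (1 : ℝ))) ∪
  (Finset.univ.image fun v : V1SAT m => (v, Sum.inr (v.1, 0), (1 : ℝ))) ∪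
  (Finset.univ.image fun v : V1SAT m => (v, Sum.inr (v.1, 1), (1 : ℝ)))

lemma noE2_true {n m : ℕ} (a : V2SAT n m) (j : Fin n) (t : Fin m) :
    ¬ E2SAT a (Sum.inl ((j, true), t)) := by
  rintro (⟨j', i', t', _, h⟩ | ⟨j', t', i', s', _, h⟩) <;> simp at h

lemma noE2trans_true {n m : ℕ} (a : V2SAT n m) (j : Fin n) (t : Fin m) :
    ¬ Relation.TransGen E2SAT a (Sum.inl ((j, true), t)) := by
  intro h
  obtain ⟨b, -, hb⟩ := Relation.TransGen.tail'_iff.mp h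
  exact noE2_true _ _ _ hb

/-- Backward direction of the 3SAT reduction: if the constructed DAG alignment instance
admits a valid alignment `M` of weight `w(M) ≥ 3m`, then the 3SAT instance is satisfiable
(some truth assignment `A` makes a literal of every clause true, where the literal
`(j, p)` is true iff `A j = !p`). -/
theorem alignment_imp_sat (n m : ℕ) (C : Fin m → Fin 3 → Fin n × Bool)
    (M : Finset (V1SAT m × V2SAT n m × ℝ))
    (hM : ValidAlignment (E1SAT C) (E2SAT (n := n) (m := m)) (betaSAT n m C) M)
    (hwM : ((3 * m : ℕ) : ℝ) ≤ ∑ e ∈ M, e.2.2) :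
    ∃ A : Fin n → Bool, ∀ i : Fin m, ∃ pos : Fin 3, A (C i pos).1 = !(C i pos).2 := by
  classical
  obtain ⟨hMβ, hdist, hconf⟩ := hM
  -- every edge of M has one of three shapes and weight 1
  have hbeta : ∀ e ∈ M,
      (e.2.1 = Sum.inl (C e.1.1 e.1.2, e.1.1) ∨ e.2.1 = Sum.inr (e.1.1, 0) ∨
        e.2.1 = Sum.inr (e.1.1, 1)) ∧ e.2.2 = 1 := by
    intro e he
    have hb := hMβ he
    simp only [betaSAT, Finset.mem_union, Finset.mem_image, Finset.mem_univ,
      true_and] at hb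
    rcases hb with (⟨v, hv⟩ | ⟨v, hv⟩) | ⟨v, hv⟩ <;> subst hv <;> simp
  -- weight of M equals its cardinality
  have hw : ∑ e ∈ M, e.2.2 = (M.card : ℝ) := by
    rw [Finset.sum_congr rfl (fun e he => (hbeta e he).2)]
    simp
  have hinj : Set.InjOn Prod.fst (M : Set (V1SAT m × V2SAT n m × ℝ)) := by
    intro e he d hd h
    by_contra hne
    exact (hdist e he d hd hne).1 h
  have hcard_le : M.card ≤ 3 * m := by
    calc M.card = (M.image Prod.fst).card := (Finset.card_image_of_injOn hinj).symm
      _ ≤ (Finset.univ : Finset (V1SAT m)).card := Finset.card_le_card (Finset.subset_univ _)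
      _ = 3 * m := by simp [mul_comm]
  have hcard_ge : 3 * m ≤ M.card := by
    rw [hw] at hwM
    exact_mod_cast hwM
  have hcard : M.card = 3 * m := le_antisymm hcard_le hcard_ge
  -- every vertex of V1 is matched
  have hsurj : ∀ v : V1SAT m, ∃ e ∈ M, e.1 = v := by
    have himg : M.image Prod.fst = Finset.univ := by
      apply Finset.eq_univ_of_card
      rw [Finset.card_image_of_injOn hinj, hcard]
      simp [mul_comm]
    intro v
    have : v ∈ M.image Prod.fst := himg ▸ Finset.mem_univ v
    obtain ⟨e, he, h⟩ := Finset.mem_image.mp this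
    exact ⟨e, he, h⟩
  -- in every clause, some literal occurrence is matched via Sum.inl
  have hexinl : ∀ i : Fin m, ∃ pos : Fin 3, ∃ e ∈ M,
      e.1 = (i, pos) ∧ e.2.1 = Sum.inl (C i pos, i) := by
    intro i
    by_contra hcon
    push_neg at hcon
    have hs : ∀ pos : Fin 3, ∃ e ∈ M, e.1 = (i, pos) ∧ ∃ s : Fin 2,
        e.2.1 = Sum.inr (i, s) := by
      intro pos
      obtain ⟨e, he, h1⟩ := hsurj (i, pos)
      rcases (hbeta e he).1 with h | h | h
      · exact absurd (by rw [h, h1]) (hcon pos e he h1)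
      · exact ⟨e, he, h1, 0, by rw [h, h1]⟩
      · exact ⟨e, he, h1, 1, by rw [h, h1]⟩
    choose f hf hf1 s hs2 using hs
    obtain ⟨p, q, hpq, hsq⟩ := Fintype.exists_ne_map_eq_of_card_lt s (by simp)
    have hne : f p ≠ f q := by
      intro h
      apply hpq
      have := (hf1 p).symm.trans (h ▸ hf1 q)
      exact (Prod.mk.injEq _ _ _ _ ▸ this).2
    exact (hdist _ (hf p) _ (hf q) hne).2 (by rw [hs2 p, hs2 q, hsq])
  -- the assignment
  refine ⟨fun j => if (∃ e ∈ M, ∃ t, e.2.1 = Sum.inl ((j, false), t)) then true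
    else false, ?_⟩
  intro i
  obtain ⟨pos, e, he, he1, he2⟩ := hexinl i
  refine ⟨pos, ?_⟩
  cases hb : (C i pos).2 with
  | false =>
    simp only [Bool.not_false]
    rw [if_pos ⟨e, he, i, by rw [he2, show C i pos = ((C i pos).1, false) from by
      rw [← hb]]⟩]
  | true =>
    simp only [Bool.not_true]
    rw [if_neg]
    rintro ⟨d, hd, t, hdt⟩
    rcases (hbeta d hd).1 with h | h | h
    · rw [h] at hdt
      have hC : C d.1.1 d.1.2 = ((C i pos).1, false) ∧ d.1.1 = t := by
        have := Sum.inl.inj hdt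
        exact ⟨(Prod.mk.injEq _ _ _ _ ▸ this).1, (Prod.mk.injEq _ _ _ _ ▸ this).2⟩
      -- conflict between d and e
      exfalso
      apply hconf d hd e he
      refine ⟨?_, Or.inl ⟨?_, ?_⟩⟩
      · intro hde
        rw [hde, h, hC.1] at he2
        have h2 := congrArg (fun p => p.1.2) (Sum.inl.inj he2)
        simp only at h2
        rw [hb] at h2
        exact Bool.noConfusion h2
      · refine Relation.TransGen.single ⟨?_, ?_, ?_⟩
        · rw [hC.1, he1]
        · rw [hC.1]
        · rw [he1]; exact hb
      · rw [he2, show C i pos = ((C i pos).1, true) from by rw [← hb]]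
        exact noE2trans_true _ _ _
    · rw [h] at hdt; cases hdt
    · rw [h] at hdt; cases hdt
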